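/- arXiv:1911.04771 — 2 statements merged into one kernel-verified Lean document; each statement's English description precedes it below -/
import Mathlib

section
/- Let U(τ) = (λ₁τ⁴ + λ_p + 2λ₃τ²)/(4(ξ₁τ² + ξ₂)²) with ξ₁, ξ₂ > 0, and set a = λ₁ξ₂ − λ₃ξ₁, b = λ_pξ₁ − λ₃ξ₂. If a > 0 and b > 0, then τ₀ = √(b/a) is a critical point of U (U'(τ₀) = 0) and U(τ₀) = (λ₁λ_p − λ₃²)/(4(λ₁ξ₂² + λ_pξ₁² − 2λ₃ξ₁ξ₂)). -/
/-- For `U(τ) = (λ₁τ⁴ + λ_p + 2λ₃τ²)/(4(ξ₁τ²+ξ₂)²)` with `a = λ₁ξ₂-λ₃ξ₁ > 0` and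
`b = λ_pξ₁-λ₃ξ₂ > 0`, the point `τ₀ = √(b/a)` is a critical point of `U` and
`U(τ₀) = (λ₁λ_p - λ₃²)/(4(λ₁ξ₂² + λ_pξ₁² - 2λ₃ξ₁ξ₂))`. -/
theorem two_field_minimum (l1 lp l3 ξ1 ξ2 : ℝ)
    (h1 : 0 < l1) (hp : 0 < lp) (hd : 0 < l1 * lp - l3^2)
    (hx1 : 0 < ξ1) (hx2 : 0 < ξ2)
    (a b : ℝ) (ha : a = l1 * ξ2 - l3 * ξ1) (hb : b = lp * ξ1 - l3 * ξ2)
    (hapos : 0 < a) (hbpos : 0 < b)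
    (U : ℝ → ℝ)
    (hU : ∀ τ : ℝ, U τ = (l1 * τ^4 + lp + 2 * l3 * τ^2) / (4 * (ξ1 * τ^2 + ξ2)^2)) :
    deriv U (Real.sqrt (b / a)) = 0
    ∧ U (Real.sqrt (b / a))
        = (l1 * lp - l3^2) / (4 * (l1 * ξ2^2 + lp * ξ1^2 - 2 * l3 * ξ1 * ξ2)) := by
  have hUeq : U = fun τ : ℝ => (l1 * τ^4 + lp + 2 * l3 * τ^2) / (4 * (ξ1 * τ^2 + ξ2)^2) :=
    funext hU
  set t := Real.sqrt (b / a) with htdef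
  have ha0 : (0:ℝ) < b / a := div_pos hbpos hapos
  have ht2 : t^2 = b / a := Real.sq_sqrt ha0.le
  have hden0 : (0:ℝ) < ξ1 * t^2 + ξ2 := by positivity
  have hden4 : (4 * (ξ1 * t^2 + ξ2)^2 : ℝ) ≠ 0 := by positivity
  have hnum : HasDerivAt (fun τ : ℝ => l1 * τ^4 + lp + 2 * l3 * τ^2)
      (l1 * (4 * t^3) + 2 * l3 * (2 * t)) t := by
    have h4 := (hasDerivAt_pow 4 t).const_mul l1
    have h2 := (hasDerivAt_pow 2 t).const_mul (2 * l3)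
    exact ((h4.add_const lp).add h2).congr_deriv (by norm_num)
  have hdenD : HasDerivAt (fun τ : ℝ => 4 * (ξ1 * τ^2 + ξ2)^2)
      (4 * (2 * (ξ1 * t^2 + ξ2) * (ξ1 * (2 * t)))) t := by
    have hin : HasDerivAt (fun τ : ℝ => ξ1 * τ^2 + ξ2) (ξ1 * (2 * t)) t := by
      simpa [mul_comm, mul_assoc] using ((hasDerivAt_pow 2 t).const_mul ξ1).add_const ξ2
    have := (hin.pow 2).const_mul (4:ℝ)
    simpa [mul_comm, mul_assoc, mul_left_comm] using this
  have hU' : HasDerivAt U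
      (((l1 * (4 * t^3) + 2 * l3 * (2 * t)) * (4 * (ξ1 * t^2 + ξ2)^2)
        - (l1 * t^4 + lp + 2 * l3 * t^2) * (4 * (2 * (ξ1 * t^2 + ξ2) * (ξ1 * (2 * t)))))
        / (4 * (ξ1 * t^2 + ξ2)^2)^2) t := by
    rw [hUeq]; exact hnum.div hdenD hden4
  have hkey : a * t^2 = b := by
    rw [ht2]; field_simp
  have ha0' : a ≠ 0 := hapos.ne'
  constructor
  · rw [hU'.deriv]
    apply div_eq_zero_iff.mpr
    left
    linear_combination (16 * t * (ξ1 * t^2 + ξ2)) * hkey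
      - (16 * t^3 * (ξ1 * t^2 + ξ2)) * ha + (16 * t * (ξ1 * t^2 + ξ2)) * hb
  · have ht4 : t^4 = (b/a)^2 := by rw [← ht2]; ring
    rw [hU t, ht4, ht2]
    have hden2 : (0:ℝ) < l1 * ξ2^2 + lp * ξ1^2 - 2 * l3 * ξ1 * ξ2 := by
      have : l1 * ξ2^2 + lp * ξ1^2 - 2 * l3 * ξ1 * ξ2 = ξ1 * b + ξ2 * a := by
        rw [ha, hb]; ring
      rw [this]; positivity
    have hA : l1 * ξ2 - l3 * ξ1 ≠ 0 := by rw [← ha]; exact ha0'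
    have hL : (0:ℝ) < 4 * (ξ1 * (b / a) + ξ2)^2 := by
      rw [← ht2]; positivity
    rw [div_eq_div_iff hL.ne' (by positivity : (0:ℝ) < 4 * (l1 * ξ2^2 + lp * ξ1^2 - 2 * l3 * ξ1 * ξ2)).ne']
    field_simp
    rw [ha, hb]
    ring
end

section
/- Let f(φ,χ) = ½[M^{D−2} + ξ_φφ² + ξ_χχ²] with ξ_φ, ξ_χ ≠ 0 and D > 2, and let G̃_{ij} = δ_{ij} + (2(D−1)/(D−2))·f_{,i}f_{,j}/f be the (rescaled) field-space metric on the two-dimensional field space. Then the scalar curvature R̃ of G̃ satisfies L(φ,χ)·R̃ = 2(D−1)(D−2)ξ_φξ_χM^{D−2}, where L = [(D−2)f + 2(D−1)(f_{,φ}² + f_{,χ}²)]². In particular R̃ vanishes identically if and only if M = 0, so for M ≠ 0 the field-space metric is not flat and no field redefinition brings both the Einstein–Hilbert term and kinetic terms to canonical form. -/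
lemma dA' (a b c : ℝ) : deriv (fun u : ℝ => (a + b*u^2 + c)/2) = fun u => b*u := by
  funext u
  have h1 : HasDerivAt (fun u : ℝ => u^2) (2*u) u := by simpa using hasDerivAt_pow 2 u
  have h := (((h1.const_mul b).const_add a).add_const c).div_const 2
  rw [h.deriv]; ring

lemma dB' (a b c : ℝ) : deriv (fun v : ℝ => (a + b + c*v^2)/2) = fun v => c*v := by
  funext v
  have h1 : HasDerivAt (fun v : ℝ => v^2) (2*v) v := by simpa using hasDerivAt_pow 2 v
  have h := ((h1.const_mul c).const_add (a + b)).div_const 2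
  rw [h.deriv]; ring

lemma dlin' (b : ℝ) : deriv (fun u : ℝ => b*u) = fun _ => b := by
  funext u
  simpa using ((hasDerivAt_id u).const_mul b).deriv

/-- For `f(φ,χ) = ½[M^{D-2} + ξ_φφ² + ξ_χχ²]` with `D > 2`, the scalar curvature
`R̃` of the rescaled field-space metric, given by the general two-field formula
`R̃ = (2(D-1)(D-2)/L)[2f f_{,φφ}f_{,χχ} - f_{,φ}²f_{,χχ} - f_{,χ}²f_{,φφ}
 - 2f_{,φχ}(f f_{,φχ} - f_{,φ}f_{,χ})]` with
`L = [(D-2)f + 2(D-1)(f_{,φ}² + f_{,χ}²)]²`, satisfies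
`L·R̃ = 2(D-1)(D-2)ξ_φξ_χM^{D-2}`; in particular `R̃` vanishes identically iff
`M = 0`, so for `M ≠ 0` the field-space metric is not flat. -/
theorem field_space_curvature (D : ℕ) (hD : 2 < D) (ξφ ξχ M : ℝ)
    (hξφ : 0 < ξφ) (hξχ : 0 < ξχ) (hM : 0 ≤ M)
    (f : ℝ → ℝ → ℝ)
    (hf : ∀ φ χ : ℝ, f φ χ = (M ^ (D - 2) + ξφ * φ^2 + ξχ * χ^2) / 2)
    (L Rt : ℝ → ℝ → ℝ)
    (hL : ∀ φ χ : ℝ, L φ χ =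
      (((D : ℝ) - 2) * f φ χ
        + 2 * ((D : ℝ) - 1) * ((deriv (fun u => f u χ) φ)^2 + (deriv (fun v => f φ v) χ)^2))^2)
    (hR : ∀ φ χ : ℝ, Rt φ χ =
      (2 * ((D : ℝ) - 1) * ((D : ℝ) - 2) / L φ χ) *
        (2 * f φ χ * deriv (deriv (fun u => f u χ)) φ * deriv (deriv (fun v => f φ v)) χ
          - (deriv (fun u => f u χ) φ)^2 * deriv (deriv (fun v => f φ v)) χ
          - (deriv (fun v => f φ v) χ)^2 * deriv (deriv (fun u => f u χ)) φ
          - 2 * (deriv (fun v => deriv (fun u => f u v) φ) χ) *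
              (f φ χ * deriv (fun v => deriv (fun u => f u v) φ) χ
                - deriv (fun u => f u χ) φ * deriv (fun v => f φ v) χ))) :
    (∀ φ χ : ℝ, L φ χ * Rt φ χ = 2 * ((D : ℝ) - 1) * ((D : ℝ) - 2) * ξφ * ξχ * M ^ (D - 2))
    ∧ ((∀ φ χ : ℝ, Rt φ χ = 0) ↔ M = 0) := by
  have hD2 : (2:ℝ) < (D:ℝ) := by exact_mod_cast hD
  have hMp : 0 ≤ M ^ (D - 2) := pow_nonneg hM _
  -- derivatives
  have hfunφ : ∀ χ : ℝ, (fun u => f u χ) = (fun u : ℝ => (M ^ (D-2) + ξφ*u^2 + ξχ*χ^2)/2) :=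
    fun χ => funext fun u => hf u χ
  have hfunχ : ∀ φ : ℝ, (fun v => f φ v) = (fun v : ℝ => (M ^ (D-2) + ξφ*φ^2 + ξχ*v^2)/2) :=
    fun φ => funext fun v => hf φ v
  have k1 : ∀ φ χ : ℝ, deriv (fun u => f u χ) φ = ξφ * φ := by
    intro φ χ; rw [hfunφ χ, dA']
  have k2 : ∀ φ χ : ℝ, deriv (fun v => f φ v) χ = ξχ * χ := by
    intro φ χ; rw [hfunχ φ, dB']
  have k3 : ∀ φ χ : ℝ, deriv (deriv (fun u => f u χ)) φ = ξφ := by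
    intro φ χ; rw [hfunφ χ, dA', dlin']
  have k4 : ∀ φ χ : ℝ, deriv (deriv (fun v => f φ v)) χ = ξχ := by
    intro φ χ; rw [hfunχ φ, dB', dlin']
  have k5 : ∀ φ χ : ℝ, deriv (fun v => deriv (fun u => f u v) φ) χ = 0 := by
    intro φ χ
    have : (fun v => deriv (fun u => f u v) φ) = fun _ : ℝ => ξφ * φ :=
      funext fun v => k1 φ v
    rw [this, deriv_const]
  -- the bracket equals ξφ ξχ M^(D-2)
  have hE : ∀ φ χ : ℝ,
      (2 * f φ χ * deriv (deriv (fun u => f u χ)) φ * deriv (deriv (fun v => f φ v)) χ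
          - (deriv (fun u => f u χ) φ)^2 * deriv (deriv (fun v => f φ v)) χ
          - (deriv (fun v => f φ v) χ)^2 * deriv (deriv (fun u => f u χ)) φ
          - 2 * (deriv (fun v => deriv (fun u => f u v) φ) χ) *
              (f φ χ * deriv (fun v => deriv (fun u => f u v) φ) χ
                - deriv (fun u => f u χ) φ * deriv (fun v => f φ v) χ))
        = ξφ * ξχ * M ^ (D - 2) := by
    intro φ χ
    rw [k1, k2, k3, k4, k5, hf]; ring
  have hRt : ∀ φ χ : ℝ, Rt φ χ =
      (2 * ((D : ℝ) - 1) * ((D : ℝ) - 2) / L φ χ) * (ξφ * ξχ * M ^ (D - 2)) := by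
    intro φ χ; rw [hR, hE]
  have part1 : ∀ φ χ : ℝ, L φ χ * Rt φ χ =
      2 * ((D : ℝ) - 1) * ((D : ℝ) - 2) * ξφ * ξχ * M ^ (D - 2) := by
    intro φ χ
    rcases eq_or_ne (L φ χ) 0 with h0 | h0
    · -- L = 0 forces M^(D-2) = 0
      have hB : ((D : ℝ) - 2) * f φ χ
          + 2 * ((D : ℝ) - 1) * ((deriv (fun u => f u χ) φ)^2 + (deriv (fun v => f φ v) χ)^2)
          = 0 := by
        have := hL φ χ; rw [h0] at this
        exact (pow_eq_zero_iff (n := 2) (by norm_num)).mp this.symm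
      rw [k1, k2, hf] at hB
      have hM0 : M ^ (D - 2) = 0 := by
        nlinarith [sq_nonneg φ, sq_nonneg χ, sq_nonneg (ξφ*φ), sq_nonneg (ξχ*χ),
          mul_pos hξφ hξφ, mul_pos hξχ hξχ, sq_nonneg (ξφ*φ^2), sq_nonneg (ξχ*χ^2),
          mul_nonneg hξφ.le (sq_nonneg φ), mul_nonneg hξχ.le (sq_nonneg χ)]
      rw [h0, hM0]; ring
    · rw [hRt φ χ]
      field_simp
  refine ⟨part1, ?_, ?_⟩
  · intro hz
    have h1 := part1 0 0
    rw [hz 0 0, mul_zero] at h1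
    have hM0 : M ^ (D - 2) = 0 := by
      have hc : 2 * ((D : ℝ) - 1) * ((D : ℝ) - 2) * ξφ * ξχ ≠ 0 :=
        ne_of_gt (mul_pos (mul_pos (mul_pos (mul_pos two_pos
          (by linarith : (0:ℝ) < (D:ℝ) - 1)) (by linarith : (0:ℝ) < (D:ℝ) - 2)) hξφ) hξχ)
      have : 2 * ((D : ℝ) - 1) * ((D : ℝ) - 2) * ξφ * ξχ * M ^ (D - 2) = 0 := h1.symm
      exact (mul_eq_zero.mp this).resolve_left hc
    exact pow_eq_zero_iff (by omega) |>.mp hM0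
  · intro hM0
    intro φ χ
    rw [hRt φ χ, hM0, zero_pow (by omega : D - 2 ≠ 0)]
    ring
end
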